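/- Let 0 ≤ ε < π/2 and let r, a, c ∈ ℝ² be pairwise distinct points with |∠ a c r − π/2| ≤ ε. Then dist(r, a) ≥ cos ε · dist(r, c). -/

import Mathlib

open Real EuclideanGeometry

noncomputable section

abbrev Pt : Type := EuclideanSpace ℝ (Fin 2)

/-- Law-of-sines estimate (Lemma 12 (1)): if `∠ a c r` is within `ε` of `π/2`,
then `dist r a ≥ cos ε · dist r c`. -/
theorem stmt12 (ε : ℝ) (hε0 : 0 ≤ ε) (hε : ε < π / 2) (r a c : Pt)
    (h1 : r ≠ a) (h2 : r ≠ c) (h3 : a ≠ c)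
    (ha : |∠ a c r - π / 2| ≤ ε) :
    Real.cos ε * dist r c ≤ dist r a := by
  set x : Pt := a - c with hx
  set y : Pt := r - c with hy
  have hxne : x ≠ 0 := sub_ne_zero.mpr h3
  have hangle : ∠ a c r = InnerProductGeometry.angle x y := rfl
  have hdra : dist r a = ‖y - x‖ := by
    rw [dist_eq_norm, hx, hy, sub_sub_sub_cancel_right]
  have hdrc : dist r c = ‖y‖ := by rw [dist_eq_norm, hy]
  have key : Real.sin (InnerProductGeometry.angle x y) * (‖x‖ * ‖y‖)
      ≤ ‖y - x‖ * ‖x‖ := by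
    rw [InnerProductGeometry.sin_angle_mul_norm_mul_norm]
    rw [show ‖y - x‖ * ‖x‖ = √((‖y - x‖ * ‖x‖) ^ 2) from
      (Real.sqrt_sq (mul_nonneg (norm_nonneg _) (norm_nonneg _))).symm]
    apply Real.sqrt_le_sqrt
    have e1 : ‖y - x‖ ^ 2 = ‖y‖ ^ 2 - 2 * inner ℝ y x + ‖x‖ ^ 2 := norm_sub_sq_real y x
    have e2 : (inner ℝ x x : ℝ) = ‖x‖ ^ 2 := real_inner_self_eq_norm_sq x
    have e3 : (inner ℝ y y : ℝ) = ‖y‖ ^ 2 := real_inner_self_eq_norm_sq y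
    have e4 : (inner ℝ y x : ℝ) = inner ℝ x y := real_inner_comm x y
    nlinarith [sq_nonneg (‖x‖ ^ 2 - (inner ℝ x y : ℝ))]
  have hxpos : (0:ℝ) < ‖x‖ := norm_pos_iff.mpr hxne
  have key2 : Real.sin (∠ a c r) * dist r c ≤ dist r a := by
    rw [hangle, hdra, hdrc]
    have := (mul_le_mul_iff_of_pos_right hxpos).mp (by linarith [key] :
      Real.sin (InnerProductGeometry.angle x y) * ‖y‖ * ‖x‖ ≤ ‖y - x‖ * ‖x‖)
    linarith
  have hsin : Real.cos ε ≤ Real.sin (∠ a c r) := by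
    have h1 : Real.sin (∠ a c r) = Real.cos (π / 2 - ∠ a c r) :=
      (Real.cos_pi_div_two_sub _).symm
    have h2 : Real.cos (π / 2 - ∠ a c r) = Real.cos |∠ a c r - π / 2| := by
      rw [← Real.cos_abs, abs_sub_comm]
    rw [h1, h2]
    exact Real.cos_le_cos_of_nonneg_of_le_pi (abs_nonneg _)
      (by linarith [Real.pi_pos]) ha
  calc Real.cos ε * dist r c ≤ Real.sin (∠ a c r) * dist r c :=
        mul_le_mul_of_nonneg_right hsin dist_nonneg
    _ ≤ dist r a := key2
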